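/- Let n2 be a positive integer, 0 < p2 < p1 < 1, 0 < q1 < 1 and 0 < q2 < 1 with q1/q2 ≥ p1/p2. Set n1 = (p2/p1)·n2 and suppose ⌈n1⌉ < n2 and ⌊n1⌋ ≥ 1. Then for every real x with 0 ≤ x ≤ n2·q2 − 1, F_{⌊n1⌋, q1}(x) < F_{n2, q2}(x) + sqrt(q1/(2·e·⌊n1⌋·(1−q1)))·𝟙{⌊n1⌋ ≠ ⌈n1⌉}. -/

import Mathlib

/-- The probability mass function of the Binomial(n, p) distribution. -/
noncomputable def binomPMF (n : ℕ) (p : ℝ) (k : ℕ) : ℝ :=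
  (n.choose k : ℝ) * p ^ k * (1 - p) ^ (n - k)

/-- The cumulative distribution function of the Binomial(n, p) distribution,
`F_{n,p}(x) = P(Bin(n,p) ≤ x)`. -/
noncomputable def binomCDF (n : ℕ) (p : ℝ) (x : ℝ) : ℝ :=
  ∑ k ∈ Finset.range (n + 1), if (k : ℝ) ≤ x then binomPMF n p k else 0

/-- The quantile function `F_{n,p}⁻¹(u) = inf {x : F_{n,p}(x) ≥ u}`. -/
noncomputable def binomQuantile (n : ℕ) (p : ℝ) (u : ℝ) : ℝ :=
  sInf {x : ℝ | u ≤ binomCDF n p x}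

noncomputable def pS (n : ℕ) (p : ℝ) (k : ℕ) : ℝ :=
  ∑ j ∈ Finset.range (k+1), binomPMF n p j

set_option maxHeartbeats 1000000



lemma hasDerivAt_term (c : ℝ) (a b : ℕ) (q : ℝ) :
    HasDerivAt (fun q : ℝ => c * q ^ a * (1 - q) ^ b)
      (c * (a * q ^ (a-1)) * (1-q) ^ b - c * q ^ a * (b * (1-q) ^ (b-1))) q := by
  have h1 : HasDerivAt (fun q : ℝ => c * q ^ a) (c * (a * q ^ (a-1))) q :=
    (hasDerivAt_pow a q).const_mul c
  have h2 : HasDerivAt (fun q : ℝ => (1 - q) ^ b) (-(b * (1-q) ^ (b-1))) q := by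
    have hb := (hasDerivAt_pow b (1 - q)).comp q
      (((hasDerivAt_id q).const_sub 1))
    simpa [mul_comm, mul_assoc, Function.comp_def] using hb
  have := h1.fun_mul h2
  exact this.congr_deriv (by ring)

lemma choose_id2 (n j : ℕ) :
    (n+1).choose (j+1) * (n - j) = (n+1) * n.choose (j+1) := by
  have h1 : n.choose (j+1) * (j+1) = n.choose j * (n - j) := Nat.choose_succ_right_eq n j
  have h2 : (n+1) * n.choose j = (n+1).choose (j+1) * (j+1) := Nat.add_one_mul_choose_eq n j
  have : ((n+1).choose (j+1) * (n - j)) * (j+1) = ((n+1) * n.choose (j+1)) * (j+1) := by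
    calc ((n+1).choose (j+1) * (n - j)) * (j+1) = ((n+1).choose (j+1) * (j+1)) * (n-j) := by ring
    _ = ((n+1) * n.choose j) * (n - j) := by rw [h2]
    _ = (n+1) * (n.choose j * (n-j)) := by ring
    _ = (n+1) * (n.choose (j+1) * (j+1)) := by rw [h1]
    _ = ((n+1) * n.choose (j+1)) * (j+1) := by ring
  exact Nat.eq_of_mul_eq_mul_right (Nat.succ_pos j) this

lemma hasDerivAt_pmf_zero (n : ℕ) (q : ℝ) :
    HasDerivAt (fun q => binomPMF (n+1) q 0) (-((n:ℝ)+1) * binomPMF n q 0) q := by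
  have h := hasDerivAt_term ((n+1).choose 0 : ℝ) 0 (n+1) q
  have hfun : (fun q : ℝ => binomPMF (n+1) q 0)
      = fun q : ℝ => ((n+1).choose 0 : ℝ) * q ^ 0 * (1 - q) ^ (n+1) := by
    funext q; simp [binomPMF]
  rw [hfun]
  convert h using 1
  simp [binomPMF]
  ring

lemma hasDerivAt_pmf_succ (n j : ℕ) (hj : j < n) (q : ℝ) :
    HasDerivAt (fun q => binomPMF (n+1) q (j+1))
      (((n:ℝ)+1) * (binomPMF n q j - binomPMF n q (j+1))) q := by
  have h := hasDerivAt_term ((n+1).choose (j+1) : ℝ) (j+1) (n-j) q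
  have e1 : (n+1) - (j+1) = n - j := by omega
  have e2 : n - j - 1 = n - (j+1) := by omega
  have e3 : n - j = (n - (j+1)) + 1 := by omega
  have c1 : (((n+1).choose (j+1) : ℝ)) * ((j:ℝ)+1) = ((n:ℝ)+1) * n.choose j := by
    have h2 : (n+1) * n.choose j = (n+1).choose (j+1) * (j+1) := Nat.add_one_mul_choose_eq n j
    exact_mod_cast h2.symm
  have c2 : (((n+1).choose (j+1) : ℝ)) * ((n:ℝ) - j) = ((n:ℝ)+1) * n.choose (j+1) := by
    have h2 := choose_id2 n j
    have := congrArg (Nat.cast : ℕ → ℝ) h2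
    push_cast [Nat.cast_sub hj.le] at this
    linarith [this]
  have hfun : (fun q : ℝ => binomPMF (n+1) q (j+1))
      = fun q : ℝ => ((n+1).choose (j+1) : ℝ) * q ^ (j+1) * (1 - q) ^ (n-j) := by
    funext q; simp only [binomPMF, e1]
  rw [hfun]
  convert h using 1
  simp only [binomPMF, e2]
  have ej : (j+1) - 1 = j := rfl
  have c3 : ((n - j : ℕ) : ℝ) = (n:ℝ) - j := Nat.cast_sub hj.le
  rw [ej, c3, e3, pow_succ, pow_succ]
  push_cast
  linear_combination (-(q^j * (1 - q)^(n-(j+1)) * (1-q))) * c1 + (q^j * q * (1 - q)^(n-(j+1))) * c2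

lemma hasDerivAt_pS (n k : ℕ) (hk : k ≤ n) (q : ℝ) :
    HasDerivAt (fun q => pS (n+1) q k) (-((n:ℝ)+1) * binomPMF n q k) q := by
  induction k with
  | zero =>
      have h := hasDerivAt_pmf_zero n q
      have hfun : (fun q : ℝ => pS (n+1) q 0) = fun q : ℝ => binomPMF (n+1) q 0 := by
        funext q; simp [pS]
      rw [hfun]; exact h
  | succ j ih =>
      have hj : j < n := hk
      have h1 := ih hj.le
      have h2 := hasDerivAt_pmf_succ n j hj q
      have hfun : (fun q : ℝ => pS (n+1) q (j+1))
          = fun q : ℝ => pS (n+1) q j + binomPMF (n+1) q (j+1) := by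
        funext q; simp [pS, Finset.sum_range_succ]
      rw [hfun]
      exact (h1.fun_add h2).congr_deriv (by ring)




lemma binomPMF_nonneg {n k : ℕ} {q : ℝ} (h0 : 0 ≤ q) (h1 : q ≤ 1) :
    0 ≤ binomPMF n q k := by
  unfold binomPMF
  have : (0:ℝ) ≤ 1 - q := by linarith
  positivity



lemma pS_anti (n k : ℕ) (hk : k ≤ n) {a b : ℝ} (h0 : 0 ≤ a) (hab : a ≤ b) (hb1 : b ≤ 1) :
    pS (n+1) b k ≤ pS (n+1) a k := by
  have hc : ContinuousOn (fun q => pS (n+1) q k) (Set.Icc a b) := fun x _ =>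
    ((hasDerivAt_pS n k hk x).differentiableAt).continuousAt.continuousWithinAt
  have hd : ∀ x ∈ interior (Set.Icc a b), deriv (fun q => pS (n+1) q k) x ≤ 0 := by
    intro x hx
    rw [interior_Icc] at hx
    rw [(hasDerivAt_pS n k hk x).deriv]
    have h0x : 0 ≤ x := le_trans h0 hx.1.le
    have hx1 : x ≤ 1 := le_trans hx.2.le hb1
    have hnn := binomPMF_nonneg (n := n) (k := k) h0x hx1
    have hn0 : (0:ℝ) ≤ (n:ℝ)+1 := by positivity
    nlinarith
  have hdiff : DifferentiableOn ℝ (fun q => pS (n+1) q k) (interior (Set.Icc a b)) :=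
    fun x _ => ((hasDerivAt_pS n k hk x).differentiableAt).differentiableWithinAt
  exact antitoneOn_of_deriv_nonpos (convex_Icc a b) hc hdiff hd
    (Set.left_mem_Icc.2 hab) (Set.right_mem_Icc.2 hab) hab

lemma pS_step (n k : ℕ) (hk : k ≤ n) (q : ℝ) :
    pS n q k = pS (n+1) q k + q * binomPMF n q k := by
  induction k with
  | zero =>
      simp only [pS, Nat.zero_add, Finset.range_one, Finset.sum_singleton, binomPMF,
        Nat.choose_zero_right, Nat.cast_one, pow_zero, Nat.sub_zero]
      rw [pow_succ]
      ring
  | succ j ih =>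
      have hj : j < n := hk
      have e1 : (n+1) - (j+1) = n - j := by omega
      have e3 : n - j = (n - (j+1)) + 1 := by omega
      have hsum : ∀ m : ℕ, ∀ q : ℝ, pS m q (j+1) = pS m q j + binomPMF m q (j+1) := by
        intro m q; simp [pS, Finset.sum_range_succ]
      rw [hsum, hsum, ih hj.le]
      have hP : binomPMF n q (j+1) = binomPMF (n+1) q (j+1) + q * binomPMF n q (j+1)
          - q * binomPMF n q j := by
        simp only [binomPMF, e1, Nat.choose_succ_succ n j]
        push_cast
        rw [show n - j = (n - (j+1)) + 1 from e3, pow_succ, pow_succ]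
        ring
      linear_combination hP

lemma pmf_strictAnti (n k : ℕ) (hk : k < n) {a b : ℝ} (ha : 0 < a) (hb : b ≤ 1)
    (hab : a < b) (hcrit : (k:ℝ) ≤ n * a) :
    StrictAntiOn (fun t => binomPMF n t k) (Set.Icc a b) := by
  have hfun : (fun t : ℝ => binomPMF n t k)
      = fun t : ℝ => (n.choose k : ℝ) * t ^ k * (1 - t) ^ (n - k) := rfl
  apply strictAntiOn_of_deriv_neg (convex_Icc a b)
  · rw [hfun]
    exact fun x _ => ((hasDerivAt_term _ k (n-k) x).differentiableAt).continuousAt.continuousWithinAt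
  · intro x hx
    rw [interior_Icc] at hx
    rw [hfun, (hasDerivAt_term _ k (n-k) x).deriv]
    have hx0 : 0 < x := lt_trans ha hx.1
    have hx1 : x < 1 := lt_of_lt_of_le hx.2 hb
    have hnx : (k:ℝ) < n * x := by
      have : (n:ℝ) * a < n * x := by
        have hn : (0:ℝ) < n := by exact_mod_cast (by omega : 0 < n)
        exact (mul_lt_mul_iff_right₀ hn).2 hx.1
      linarith
    have hC : (0:ℝ) < (n.choose k : ℝ) := by exact_mod_cast Nat.choose_pos hk.le
    have h1x : (0:ℝ) < 1 - x := by linarith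
    rcases Nat.eq_zero_or_pos k with hk0 | hkp
    · subst hk0
      have hnk : n - 0 = n := rfl
      simp only [Nat.cast_zero, pow_zero, hnk, Nat.choose_zero_right, Nat.cast_one]
      have hn1 : 1 ≤ n := hk
      have : (0:ℝ) < (n:ℝ) * (1-x)^(n-1) := by
        have hn : (0:ℝ) < n := by exact_mod_cast hn1
        positivity
      nlinarith
    · obtain ⟨j, rfl⟩ : ∃ j, k = j + 1 := ⟨k - 1, by omega⟩
      have ej : (j+1) - 1 = j := rfl
      rw [ej]
      obtain ⟨M, hM⟩ : ∃ M, n - (j+1) = M + 1 := ⟨n-(j+1)-1, by omega⟩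
      have hF : (0:ℝ) < (n.choose (j+1) : ℝ) * x ^ j * (1-x) ^ M := by positivity
      have hxk : x ^ (j+1) = x ^ j * x := pow_succ x j
      have hcast : ((n - (j+1) : ℕ) : ℝ) = (n:ℝ) - (j+1) := by
        rw [Nat.cast_sub hk.le]; push_cast; ring
      rw [hcast, hxk, hM, pow_succ]
      push_cast at hnx ⊢
      nlinarith [mul_pos hF (show (0:ℝ) < (n:ℝ) * x - ((j:ℝ)+1) by linarith)]







lemma step_lt (n k : ℕ) (p : ℝ) (hp0 : 0 < p) (hp1 : p < 1) (hk : (k:ℝ)+1 ≤ n*p) :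
    pS n p k < pS (n+1) ((n:ℝ)*p/((n:ℝ)+1)) k := by
  have hn0 : (0:ℝ) < n := by
    by_contra h
    push_neg at h
    have : (n:ℝ) * p ≤ 0 := mul_nonpos_of_nonpos_of_nonneg h hp0.le
    have : (0:ℝ) ≤ k := Nat.cast_nonneg k
    linarith
  have hkltn : (k:ℝ) < n := by nlinarith
  have hkn : k < n := by exact_mod_cast hkltn
  set p' := (n:ℝ)*p/((n:ℝ)+1) with hp'
  have hn1 : (0:ℝ) < (n:ℝ)+1 := by linarith
  have hp'p : p' < p := by
    rw [hp', div_lt_iff₀ hn1]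
    nlinarith
  have hp'0 : 0 < p' := by positivity
  have hcrit : (k:ℝ) ≤ n * p' := by
    rw [hp', mul_div_assoc', le_div_iff₀ hn1]
    nlinarith [mul_le_mul_of_nonneg_right hk hn0.le, hkltn]
  have hkn' : k ≤ n := hkn.le
  set c := binomPMF n p k with hc
  -- H is strictly antitone on [p', p]
  have hH : StrictAntiOn (fun t => pS (n+1) t k + ((n:ℝ)+1) * t * c) (Set.Icc p' p) := by
    have hder : ∀ t : ℝ, HasDerivAt (fun t => pS (n+1) t k + ((n:ℝ)+1) * t * c)
        (-((n:ℝ)+1) * binomPMF n t k + ((n:ℝ)+1) * c) t := by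
      intro t
      have h1 := hasDerivAt_pS n k hkn' t
      have h2 : HasDerivAt (fun t : ℝ => ((n:ℝ)+1) * t * c) (((n:ℝ)+1) * c) t := by
        have := ((hasDerivAt_id t).const_mul ((n:ℝ)+1)).mul_const c
        simpa using this
      exact h1.add h2
    apply strictAntiOn_of_deriv_neg (convex_Icc p' p)
    · exact fun x _ => ((hder x).differentiableAt).continuousAt.continuousWithinAt
    · intro x hx
      rw [interior_Icc] at hx
      rw [(hder x).deriv]
      have hlt : c < binomPMF n x k := by
        have hmono := pmf_strictAnti n k hkn hp'0 hp1.le hp'p hcrit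
        have hxm : x ∈ Set.Icc p' p := ⟨hx.1.le, hx.2.le⟩
        have hpm : p ∈ Set.Icc p' p := ⟨hp'p.le, le_refl p⟩
        exact hmono hxm hpm hx.2
      nlinarith
  have hHlt := hH (Set.left_mem_Icc.2 hp'p.le) (Set.right_mem_Icc.2 hp'p.le) hp'p
  simp only at hHlt
  have hstep := pS_step n k hkn' p
  have hid : ((n:ℝ)+1) * p' = (n:ℝ) * p := by
    rw [hp']; field_simp
  rw [← hc] at hstep
  have hid2 : ((n:ℝ)+1) * p' * c = (n:ℝ) * p * c := by rw [hid]
  nlinarith [hHlt, hstep, hid2]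

lemma key_step (μ : ℝ) (k : ℕ) (hk1 : (k:ℝ)+1 ≤ μ) (j : ℕ) (hμj : μ < j) :
    pS j (μ/j) k < pS (j+1) (μ/(j+1)) k := by
  have hμ0 : 0 < μ := by
    have h0 : (0:ℝ) ≤ k := Nat.cast_nonneg k
    linarith
  have hj0 : (0:ℝ) < j := lt_trans hμ0 hμj
  have e : (j:ℝ)*(μ/j) = μ := by field_simp
  have h := step_lt j k (μ/j) (by positivity) ((div_lt_one hj0).2 hμj)
    (by rw [e]; exact hk1)
  rw [e] at h
  exact_mod_cast h

lemma chain (μ : ℝ) (k : ℕ) (hk1 : (k:ℝ)+1 ≤ μ) (s : ℕ) (hμs : μ < s) :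
    ∀ t : ℕ, s < t → pS s (μ/s) k < pS t (μ/t) k := by
  intro t ht
  induction t, ht using Nat.le_induction with
  | base => exact_mod_cast key_step μ k hk1 s hμs
  | succ t ht ih =>
      have hμt : μ < (t:ℝ) := by
        have : (s:ℝ) ≤ t := by exact_mod_cast Nat.le_of_lt ht
        linarith
      exact_mod_cast lt_trans ih (key_step μ k hk1 t hμt)

section Stirl


open Stirling Real

lemma sqrt_pi_le_stirlingSeq {n : ℕ} (hn : 1 ≤ n) : Real.sqrt Real.pi ≤ stirlingSeq n := by
  obtain ⟨j, rfl⟩ : ∃ j, n = j + 1 := ⟨n - 1, by omega⟩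
  have htend : Filter.Tendsto (stirlingSeq ∘ Nat.succ) Filter.atTop (nhds (Real.sqrt Real.pi)) :=
    tendsto_stirlingSeq_sqrt_pi.comp (Filter.tendsto_add_atTop_nat 1)
  exact stirlingSeq'_antitone.le_of_tendsto htend j

lemma stirlingSeq_le_two {n : ℕ} (hn : 2 ≤ n) : stirlingSeq n ≤ Real.exp 1 ^ 2 / 4 := by
  obtain ⟨j, rfl⟩ : ∃ j, n = j + 1 := ⟨n - 1, by omega⟩
  have h2 : stirlingSeq 2 = Real.exp 1 ^ 2 / 4 := by
    have hs4 : Real.sqrt (2 * (2:ℕ)) = 2 := by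
      rw [show (2 * (2:ℕ) : ℝ) = 2 ^ 2 by norm_num, Real.sqrt_sq (by norm_num)]
    rw [stirlingSeq, hs4]
    rw [Nat.factorial_two]
    rw [div_pow]
    field_simp
    ring
  rw [← h2]
  exact stirlingSeq'_antitone (show 1 ≤ j by omega)

-- S1 : lower bound for factorial squared
lemma fact_sq_ge (n : ℕ) (hn : 1 ≤ n) :
    2 * Real.pi * (n:ℝ) ^ (2*n+1) ≤ ((n.factorial : ℝ))^2 * Real.exp 1 ^ (2*n) := by
  have hpos : (0:ℝ) < Real.sqrt (2 * n) * ((n:ℝ) / Real.exp 1) ^ n := by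
    have hn0 : (0:ℝ) < n := by exact_mod_cast hn
    have he : (0:ℝ) < Real.exp 1 := Real.exp_pos 1
    positivity
  have h := sqrt_pi_le_stirlingSeq hn
  rw [stirlingSeq, le_div_iff₀ hpos] at h
  have hsq := mul_self_le_mul_self (by positivity) h
  have hexp : (0:ℝ) < Real.exp 1 ^ (2*n) := by positivity
  have hkey : (Real.sqrt Real.pi * (Real.sqrt (2 * n) * ((n:ℝ) / Real.exp 1) ^ n)) *
      (Real.sqrt Real.pi * (Real.sqrt (2 * n) * ((n:ℝ) / Real.exp 1) ^ n)) * Real.exp 1 ^ (2*n)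
      = 2 * Real.pi * (n:ℝ) ^ (2*n+1) := by
    have e1 : Real.sqrt Real.pi * Real.sqrt Real.pi = Real.pi :=
      Real.mul_self_sqrt Real.pi_pos.le
    have e2 : Real.sqrt (2*(n:ℕ)) * Real.sqrt (2*(n:ℕ)) = 2*(n:ℝ) := by
      rw [Real.mul_self_sqrt (by positivity)]
    have e3 : ((n:ℝ) / Real.exp 1) ^ n * ((n:ℝ) / Real.exp 1) ^ n * Real.exp 1 ^ (2*n)
        = (n:ℝ) ^ (2*n) := by
      rw [div_pow]
      have epow : Real.exp 1 ^ (2*n) = Real.exp 1 ^ n * Real.exp 1 ^ n := by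
        rw [← pow_add]; congr 1; omega
      have npow : (n:ℝ) ^ (2*n) = (n:ℝ)^n * (n:ℝ)^n := by
        rw [← pow_add]; congr 1; omega
      have hne : Real.exp 1 ^ n ≠ 0 := by positivity
      rw [epow, npow]
      field_simp
    calc (Real.sqrt Real.pi * (Real.sqrt (2 * n) * ((n:ℝ) / Real.exp 1) ^ n)) *
      (Real.sqrt Real.pi * (Real.sqrt (2 * n) * ((n:ℝ) / Real.exp 1) ^ n)) * Real.exp 1 ^ (2*n)
        = (Real.sqrt Real.pi * Real.sqrt Real.pi) * (Real.sqrt (2*(n:ℕ)) * Real.sqrt (2*(n:ℕ))) *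
          (((n:ℝ) / Real.exp 1) ^ n * ((n:ℝ) / Real.exp 1) ^ n * Real.exp 1 ^ (2*n)) := by ring
      _ = Real.pi * (2*(n:ℝ)) * (n:ℝ)^(2*n) := by rw [e1, e2, e3]
      _ = 2 * Real.pi * (n:ℝ) ^ (2*n+1) := by rw [pow_succ]; ring
  calc 2 * Real.pi * (n:ℝ) ^ (2*n+1)
      = (Real.sqrt Real.pi * (Real.sqrt (2 * n) * ((n:ℝ) / Real.exp 1) ^ n)) *
        (Real.sqrt Real.pi * (Real.sqrt (2 * n) * ((n:ℝ) / Real.exp 1) ^ n)) * Real.exp 1 ^ (2*n) := hkey.symm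
    _ ≤ ((n.factorial:ℝ) * (n.factorial:ℝ)) * Real.exp 1 ^ (2*n) := by
        apply mul_le_mul_of_nonneg_right hsq hexp.le
    _ = ((n.factorial : ℝ))^2 * Real.exp 1 ^ (2*n) := by ring

-- S2 : upper bound for factorial squared, m ≥ 2
lemma fact_sq_le (m : ℕ) (hm : 2 ≤ m) :
    ((m.factorial : ℝ))^2 * Real.exp 1 ^ (2*m) ≤ Real.exp 1 ^ 4 / 8 * (m:ℝ) ^ (2*m+1) := by
  have hm0 : (0:ℝ) < m := by exact_mod_cast (by omega : 0 < m)
  have he : (0:ℝ) < Real.exp 1 := Real.exp_pos 1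
  have hpos : (0:ℝ) < Real.sqrt (2 * m) * ((m:ℝ) / Real.exp 1) ^ m := by positivity
  have h := stirlingSeq_le_two hm
  rw [stirlingSeq, div_le_iff₀ hpos] at h
  have hf : (0:ℝ) ≤ (m.factorial : ℝ) := by positivity
  have hsq := mul_self_le_mul_self hf h
  have key : (Real.exp 1 ^ 2 / 4 * (Real.sqrt (2 * ↑m) * ((m:ℝ) / Real.exp 1) ^ m)) *
      (Real.exp 1 ^ 2 / 4 * (Real.sqrt (2 * ↑m) * ((m:ℝ) / Real.exp 1) ^ m)) * Real.exp 1 ^ (2*m)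
      = Real.exp 1 ^ 4 / 8 * (m:ℝ) ^ (2*m+1) := by
    have e2 : Real.sqrt (2*(m:ℕ)) * Real.sqrt (2*(m:ℕ)) = 2*(m:ℝ) := by
      rw [Real.mul_self_sqrt (by positivity)]
    have e3 : ((m:ℝ) / Real.exp 1) ^ m * ((m:ℝ) / Real.exp 1) ^ m * Real.exp 1 ^ (2*m)
        = (m:ℝ) ^ (2*m) := by
      rw [div_pow]
      have epow : Real.exp 1 ^ (2*m) = Real.exp 1 ^ m * Real.exp 1 ^ m := by
        rw [← pow_add]; congr 1; omega
      have npow : (m:ℝ) ^ (2*m) = (m:ℝ)^m * (m:ℝ)^m := by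
        rw [← pow_add]; congr 1; omega
      have hne : Real.exp 1 ^ m ≠ 0 := by positivity
      rw [epow, npow]
      field_simp
    calc (Real.exp 1 ^ 2 / 4 * (Real.sqrt (2 * ↑m) * ((m:ℝ) / Real.exp 1) ^ m)) *
      (Real.exp 1 ^ 2 / 4 * (Real.sqrt (2 * ↑m) * ((m:ℝ) / Real.exp 1) ^ m)) * Real.exp 1 ^ (2*m)
        = (Real.exp 1^2 * Real.exp 1^2 / 16) * (Real.sqrt (2*(m:ℕ)) * Real.sqrt (2*(m:ℕ))) *
          (((m:ℝ) / Real.exp 1) ^ m * ((m:ℝ) / Real.exp 1) ^ m * Real.exp 1 ^ (2*m)) := by ring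
      _ = (Real.exp 1^2 * Real.exp 1^2 / 16) * (2*(m:ℝ)) * (m:ℝ)^(2*m) := by rw [e2, e3]
      _ = Real.exp 1 ^ 4 / 8 * (m:ℝ) ^ (2*m+1) := by rw [pow_succ]; ring
  calc ((m.factorial : ℝ))^2 * Real.exp 1 ^ (2*m)
      = ((m.factorial : ℝ) * (m.factorial : ℝ)) * Real.exp 1 ^ (2*m) := by ring
    _ ≤ (Real.exp 1 ^ 2 / 4 * (Real.sqrt (2 * ↑m) * ((m:ℝ) / Real.exp 1) ^ m)) *
      (Real.exp 1 ^ 2 / 4 * (Real.sqrt (2 * ↑m) * ((m:ℝ) / Real.exp 1) ^ m)) * Real.exp 1 ^ (2*m) := by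
        apply mul_le_mul_of_nonneg_right hsq (by positivity)
    _ = Real.exp 1 ^ 4 / 8 * (m:ℝ) ^ (2*m+1) := key

-- S3
lemma pow_succ_ge_exp (m : ℕ) (hm : 1 ≤ m) :
    Real.exp 1 ^ 2 * (m:ℝ) ^ (2*m+2) ≤ ((m:ℝ)+1) ^ (2*m+2) := by
  have hm0 : (0:ℝ) < m := by exact_mod_cast hm
  have hx : Real.exp (1/((m:ℝ)+1)) ≤ ((m:ℝ)+1)/m := by
    have h1 : 1 - 1/((m:ℝ)+1) ≤ Real.exp (-(1/((m:ℝ)+1))) := by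
      have := Real.add_one_le_exp (-(1/((m:ℝ)+1)))
      linarith
    have h2 : (0:ℝ) < 1 - 1/((m:ℝ)+1) := by
      rw [sub_pos, div_lt_one (by linarith)]
      linarith
    have h3 : Real.exp (1/((m:ℝ)+1)) = (Real.exp (-(1/((m:ℝ)+1))))⁻¹ := by
      rw [← Real.exp_neg]; ring_nf
    rw [h3]
    rw [inv_le_comm₀ (Real.exp_pos _) (by positivity)]
    calc (((m:ℝ)+1)/m)⁻¹ = 1 - 1/((m:ℝ)+1) := by field_simp; ring
      _ ≤ Real.exp (-(1/((m:ℝ)+1))) := h1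
  have hexp : Real.exp 1 = Real.exp (1/((m:ℝ)+1)) ^ (m+1) := by
    rw [← Real.exp_nat_mul]
    congr 1
    field_simp
    push_cast
    ring
  have h4 : Real.exp 1 ≤ (((m:ℝ)+1)/m) ^ (m+1) := by
    rw [hexp]
    exact pow_le_pow_left₀ (Real.exp_pos _).le hx (m+1)
  have h5 : Real.exp 1 * (m:ℝ)^(m+1) ≤ ((m:ℝ)+1)^(m+1) := by
    have := mul_le_mul_of_nonneg_right h4 (by positivity : (0:ℝ) ≤ (m:ℝ)^(m+1))
    calc Real.exp 1 * (m:ℝ)^(m+1) ≤ (((m:ℝ)+1)/m) ^ (m+1) * (m:ℝ)^(m+1) := this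
      _ = ((m:ℝ)+1)^(m+1) := by
          rw [div_pow]
          field_simp
  have h6 := mul_le_mul h5 h5 (by positivity) (by positivity)
  calc Real.exp 1 ^ 2 * (m:ℝ) ^ (2*m+2)
      = (Real.exp 1 * (m:ℝ)^(m+1)) * (Real.exp 1 * (m:ℝ)^(m+1)) := by
        rw [show 2*m+2 = (m+1)+(m+1) by omega, pow_add]; ring
    _ ≤ ((m:ℝ)+1)^(m+1) * (((m:ℝ)+1)^(m+1)) := h6
    _ = ((m:ℝ)+1) ^ (2*m+2) := by rw [← pow_add]; congr 1; omega

-- S4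
lemma exp_five_le : Real.exp 1 ^ 5 ≤ 16 * Real.pi ^ 2 := by
  have h1 : Real.exp 1 < 2.7182818286 := Real.exp_one_lt_d9
  have h2 : (3.141592 : ℝ) < Real.pi := Real.pi_gt_d6
  have he : (0:ℝ) < Real.exp 1 := Real.exp_pos 1
  nlinarith [sq_nonneg (Real.exp 1), sq_nonneg Real.pi, he.le, h1, h2,
    pow_le_pow_left₀ he.le h1.le 5]

end Stirl






lemma starT (m k : ℕ) (hm : 1 ≤ m) (hk : k < m) :
    2 * Real.exp 1 * (m:ℝ) * ((m.factorial:ℝ))^2 * ((k+1:ℕ):ℝ)^(2*(k+1)+1) * ((m-k:ℕ):ℝ)^(2*(m-k)+1)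
      ≤ (((k+1).factorial:ℝ))^2 * (((m-k).factorial:ℝ))^2 * ((m:ℝ)+1)^(2*m+2) := by
  rcases eq_or_lt_of_le hm with h1 | h2
  · -- m = 1, k = 0
    have hm1 : m = 1 := h1.symm
    have hk0 : k = 0 := by omega
    subst hm1; subst hk0
    norm_num
    have := Real.exp_one_lt_d9
    nlinarith
  · have hm2 : 2 ≤ m := h2
    set E := Real.exp 1 with hE
    set K := k + 1 with hKdef
    set L := m - k with hLdef
    have hK1 : 1 ≤ K := by omega
    have hL1 : 1 ≤ L := by omega
    have hKL : K + L = m + 1 := by omega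
    have hEpos : (0:ℝ) < E := Real.exp_pos 1
    have hmpos : (0:ℝ) < m := by exact_mod_cast (by omega : 0 < m)
    have hKpos : (0:ℝ) < (K:ℝ) := by exact_mod_cast hK1
    have hLpos : (0:ℝ) < (L:ℝ) := by exact_mod_cast hL1
    have hpipos := Real.pi_pos
    have S2 := fact_sq_le m hm2
    have S1K := fact_sq_ge K hK1
    have S1L := fact_sq_ge L hL1
    have S3 := pow_succ_ge_exp m hm
    have S4 := exp_five_le
    rw [← hE] at S2 S1K S1L S3 S4
    have hEp : (0:ℝ) < E ^ (2*m+2) := by positivity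
    apply le_of_mul_le_mul_right _ hEp
    have eKL : E^(2*K) * E^(2*L) = E^(2*m+2) := by
      rw [← pow_add]; congr 1; omega
    calc 2 * E * (m:ℝ) * ((m.factorial:ℝ))^2 * ((K:ℕ):ℝ)^(2*K+1) * ((L:ℕ):ℝ)^(2*L+1) * E^(2*m+2)
        = (2 * E * (m:ℝ) * E^2 * (K:ℝ)^(2*K+1) * (L:ℝ)^(2*L+1)) * (((m.factorial:ℝ))^2 * E^(2*m)) := by
          rw [show 2*m+2 = 2*m + 2 by rfl, pow_add]; ring
      _ ≤ (2 * E * (m:ℝ) * E^2 * (K:ℝ)^(2*K+1) * (L:ℝ)^(2*L+1)) * (E ^ 4 / 8 * (m:ℝ) ^ (2*m+1)) := by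
          apply mul_le_mul_of_nonneg_left S2 (by positivity)
      _ = (E^5/4 * (K:ℝ)^(2*K+1) * (L:ℝ)^(2*L+1)) * (E^2 * (m:ℝ)^(2*m+2)) := by
          rw [show 2*m+2 = (2*m+1) + 1 by omega, pow_add]; ring
      _ ≤ (E^5/4 * (K:ℝ)^(2*K+1) * (L:ℝ)^(2*L+1)) * (((m:ℝ)+1)^(2*m+2)) := by
          apply mul_le_mul_of_nonneg_left S3 (by positivity)
      _ ≤ (16 * Real.pi^2/4 * (K:ℝ)^(2*K+1) * (L:ℝ)^(2*L+1)) * (((m:ℝ)+1)^(2*m+2)) := by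
          have hKLnn : (0:ℝ) ≤ (K:ℝ)^(2*K+1) * (L:ℝ)^(2*L+1) * ((m:ℝ)+1)^(2*m+2) := by positivity
          nlinarith [mul_le_mul_of_nonneg_right S4 hKLnn]
      _ = (2 * Real.pi * (K:ℝ)^(2*K+1)) * (2 * Real.pi * (L:ℝ)^(2*L+1)) * (((m:ℝ)+1)^(2*m+2)) := by
          ring
      _ ≤ (((K.factorial:ℝ))^2 * E^(2*K)) * (((L.factorial:ℝ))^2 * E^(2*L)) * (((m:ℝ)+1)^(2*m+2)) := by
          apply mul_le_mul_of_nonneg_right _ (by positivity)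
          apply mul_le_mul S1K S1L (by positivity) (by positivity)
      _ = (((K.factorial:ℝ))^2 * ((L.factorial:ℝ))^2 * ((m:ℝ)+1)^(2*m+2)) * E^(2*m+2) := by
          rw [← eKL]; ring

lemma star (m k : ℕ) (hm : 1 ≤ m) (hk : k < m) :
    2 * Real.exp 1 * (m:ℝ) * ((m.choose k : ℝ))^2 * (((k+1:ℕ):ℝ)/((m:ℝ)+1))^(2*k+1)
      * (((m-k:ℕ):ℝ)/((m:ℝ)+1))^(2*(m-k)+1) ≤ 1 := by
  set E := Real.exp 1 with hE
  have hEpos : (0:ℝ) < E := Real.exp_pos 1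
  have hmpos : (0:ℝ) < (m:ℝ)+1 := by positivity
  have hT := starT m k hm hk
  rw [← hE] at hT
  -- rewrite K-power and K-factorial in hT
  have hKfac : (((k+1).factorial:ℝ))^2 = ((k+1:ℕ):ℝ)^2 * ((k.factorial:ℝ))^2 := by
    rw [Nat.factorial_succ]; push_cast; ring
  have hKpow : ((k+1:ℕ):ℝ)^(2*(k+1)+1) = ((k+1:ℕ):ℝ)^2 * ((k+1:ℕ):ℝ)^(2*k+1) := by
    rw [← pow_add]; congr 1; omega
  rw [hKfac, hKpow] at hT
  have hKpos : (0:ℝ) < ((k+1:ℕ):ℝ)^2 := by positivity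
  have key : 2 * E * (m:ℝ) * ((m.factorial:ℝ))^2 * ((k+1:ℕ):ℝ)^(2*k+1) * ((m-k:ℕ):ℝ)^(2*(m-k)+1)
      ≤ ((k.factorial:ℝ))^2 * (((m-k).factorial:ℝ))^2 * ((m:ℝ)+1)^(2*m+2) := by
    apply le_of_mul_le_mul_left _ hKpos
    calc ((k+1:ℕ):ℝ)^2 * (2 * E * (m:ℝ) * ((m.factorial:ℝ))^2 * ((k+1:ℕ):ℝ)^(2*k+1) * ((m-k:ℕ):ℝ)^(2*(m-k)+1))
        = 2 * E * (m:ℝ) * ((m.factorial:ℝ))^2 * (((k+1:ℕ):ℝ)^2 * ((k+1:ℕ):ℝ)^(2*k+1)) * ((m-k:ℕ):ℝ)^(2*(m-k)+1) := by ring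
      _ ≤ ((k+1:ℕ):ℝ)^2 * ((k.factorial:ℝ))^2 * (((m-k).factorial:ℝ))^2 * ((m:ℝ)+1)^(2*m+2) := hT
      _ = ((k+1:ℕ):ℝ)^2 * (((k.factorial:ℝ))^2 * (((m-k).factorial:ℝ))^2 * ((m:ℝ)+1)^(2*m+2)) := by ring
  -- now convert the goal
  rw [Nat.cast_choose ℝ hk.le]
  have hfk : (0:ℝ) < (k.factorial:ℝ) := by exact_mod_cast k.factorial_pos
  have hfL : (0:ℝ) < ((m-k).factorial:ℝ) := by exact_mod_cast (m-k).factorial_pos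
  have epow : ((m:ℝ)+1)^(2*k+1) * ((m:ℝ)+1)^(2*(m-k)+1) = ((m:ℝ)+1)^(2*m+2) := by
    rw [← pow_add]; congr 1; omega
  rw [div_pow, div_pow, div_pow]
  rw [show 2 * E * (m:ℝ) * ((m.factorial:ℝ)^2 / ((k.factorial:ℝ) * ((m-k).factorial:ℝ))^2)
      * (((k+1:ℕ):ℝ)^(2*k+1) / ((m:ℝ)+1)^(2*k+1))
      * (((m-k:ℕ):ℝ)^(2*(m-k)+1) / ((m:ℝ)+1)^(2*(m-k)+1))
      = (2 * E * (m:ℝ) * (m.factorial:ℝ)^2 * ((k+1:ℕ):ℝ)^(2*k+1) * ((m-k:ℕ):ℝ)^(2*(m-k)+1))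
        / (((k.factorial:ℝ) * ((m-k).factorial:ℝ))^2 * (((m:ℝ)+1)^(2*k+1) * ((m:ℝ)+1)^(2*(m-k)+1))) by
    field_simp]
  rw [div_le_one (by positivity), epow]
  calc 2 * E * (m:ℝ) * (m.factorial:ℝ)^2 * ((k+1:ℕ):ℝ)^(2*k+1) * ((m-k:ℕ):ℝ)^(2*(m-k)+1)
      ≤ ((k.factorial:ℝ))^2 * (((m-k).factorial:ℝ))^2 * ((m:ℝ)+1)^(2*m+2) := key
    _ = ((k.factorial:ℝ) * ((m-k).factorial:ℝ))^2 * ((m:ℝ)+1)^(2*m+2) := by ring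





lemma pmf_bound (m k : ℕ) (hm : 1 ≤ m) (q : ℝ) (hq0 : 0 < q) (hq1 : q < 1)
    (hk : (k:ℝ)+1 ≤ ((m:ℝ)+1)*q) :
    q * binomPMF m q k ≤ Real.sqrt (q/(2*Real.exp 1*(m:ℝ)*(1-q))) := by
  have hEpos := Real.exp_pos 1
  have h1q : (0:ℝ) < 1 - q := by linarith
  have hm0 : (0:ℝ) < m := by exact_mod_cast hm
  have hm1 : (0:ℝ) < (m:ℝ)+1 := by linarith
  have hkm : k < m := by
    have h1 : (k:ℝ) + 1 < (m:ℝ)+1 := lt_of_le_of_lt hk (by nlinarith)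
    have : (k:ℝ) < (m:ℝ) := by linarith
    exact_mod_cast this
  set L := m - k with hL
  set qs := ((k+1:ℕ):ℝ)/((m:ℝ)+1) with hqs
  have hqs0 : 0 < qs := by rw [hqs]; positivity
  have hqsq : qs ≤ q := by
    rw [hqs, div_le_iff₀ hm1]
    push_cast
    linarith
  have h1qs : 1 - qs = ((L:ℕ):ℝ)/((m:ℝ)+1) := by
    rw [hqs, hL, Nat.cast_sub hkm.le]
    push_cast
    field_simp
    ring
  -- ψ is antitone on [qs, q]
  have hder : ∀ t : ℝ, HasDerivAt (fun t : ℝ => t^(2*k+1)*(1-t)^(2*L+1))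
      (((2*k+1:ℕ):ℝ) * t^(2*k) * (1-t)^(2*L+1) - t^(2*k+1)*(((2*L+1:ℕ):ℝ) * (1-t)^(2*L))) t := by
    intro t
    have h := hasDerivAt_term 1 (2*k+1) (2*L+1) t
    have e1 : 2*k+1-1 = 2*k := by omega
    have e2 : 2*L+1-1 = 2*L := by omega
    rw [e1, e2] at h
    have hfun : (fun q : ℝ => (1:ℝ) * q ^ (2*k+1) * (1 - q) ^ (2*L+1))
        = fun t : ℝ => t^(2*k+1)*(1-t)^(2*L+1) := by funext t; ring
    rw [hfun] at h
    convert h using 1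
    push_cast
    ring
  have hanti : (fun t : ℝ => t^(2*k+1)*(1-t)^(2*L+1)) q
      ≤ (fun t : ℝ => t^(2*k+1)*(1-t)^(2*L+1)) qs := by
    have hcont : ContinuousOn (fun t : ℝ => t^(2*k+1)*(1-t)^(2*L+1)) (Set.Icc qs q) :=
      fun x _ => ((hder x).differentiableAt).continuousAt.continuousWithinAt
    have hdiff : DifferentiableOn ℝ (fun t : ℝ => t^(2*k+1)*(1-t)^(2*L+1))
        (interior (Set.Icc qs q)) :=
      fun x _ => ((hder x).differentiableAt).differentiableWithinAt
    have hnonpos : ∀ x ∈ interior (Set.Icc qs q),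
        deriv (fun t : ℝ => t^(2*k+1)*(1-t)^(2*L+1)) x ≤ 0 := by
      intro x hx
      rw [interior_Icc] at hx
      rw [(hder x).deriv]
      have hx0 : 0 < x := lt_trans hqs0 hx.1
      have hx1 : x < 1 := lt_of_lt_of_le hx.2 hq1.le
      have hfactor : ((2*k+1:ℕ):ℝ) * x^(2*k) * (1-x)^(2*L+1) - x^(2*k+1)*(((2*L+1:ℕ):ℝ) * (1-x)^(2*L))
          = x^(2*k) * (1-x)^(2*L) * (((2*k+1:ℕ):ℝ)*(1-x) - ((2*L+1:ℕ):ℝ)*x) := by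
        rw [pow_succ, pow_succ]
        ring
      rw [hfactor]
      apply mul_nonpos_of_nonneg_of_nonpos (mul_nonneg (pow_nonneg hx0.le _) (pow_nonneg (by linarith : (0:ℝ) ≤ 1-x) _))
      -- (2k+1)(1-x) - (2L+1)x ≤ 0
      have hxgt : ((k:ℝ)+1)/((m:ℝ)+1) < x := by rw [hqs] at hx; push_cast at hx; exact hx.1
      have hxx : 2*((k:ℝ)+1) < (2*(m:ℝ)+2) * x := by
        rw [div_lt_iff₀ hm1] at hxgt
        nlinarith
      have hLcast : ((L:ℕ):ℝ) = (m:ℝ) - k := by rw [hL, Nat.cast_sub hkm.le]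
      push_cast [hLcast]
      nlinarith
    exact antitoneOn_of_deriv_nonpos (convex_Icc qs q) hcont hdiff hnonpos
      (Set.left_mem_Icc.2 hqsq) (Set.right_mem_Icc.2 hqsq) hqsq
  simp only at hanti
  -- assemble
  apply Real.le_sqrt_of_sq_le
  rw [le_div_iff₀ (by positivity)]
  have expand : (q * binomPMF m q k)^2 * (2*Real.exp 1*(m:ℝ)*(1-q))
      = (2 * Real.exp 1 * (m:ℝ) * ((m.choose k : ℝ))^2) * (q^(2*k+1)*(1-q)^(2*L+1)) * q := by
    unfold binomPMF
    rw [← hL]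
    ring
  rw [expand]
  have hstar := star m k hm hkm
  rw [← hqs, ← h1qs, ← hL] at hstar
  calc (2 * Real.exp 1 * (m:ℝ) * ((m.choose k : ℝ))^2) * (q^(2*k+1)*(1-q)^(2*L+1)) * q
      ≤ (2 * Real.exp 1 * (m:ℝ) * ((m.choose k : ℝ))^2) * (qs^(2*k+1)*(1-qs)^(2*L+1)) * q := by
        apply mul_le_mul_of_nonneg_right _ hq0.le
        apply mul_le_mul_of_nonneg_left hanti (by positivity)
    _ ≤ 1 * q := by
        apply mul_le_mul_of_nonneg_right _ hq0.le
        calc 2 * Real.exp 1 * (m:ℝ) * ((m.choose k : ℝ))^2 * (qs^(2*k+1)*(1-qs)^(2*L+1))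
            = 2 * Real.exp 1 * (m:ℝ) * ((m.choose k : ℝ))^2 * qs^(2*k+1)*(1-qs)^(2*L+1) := by ring
          _ ≤ 1 := hstar
    _ = q := one_mul q









lemma binomCDF_eq_pS (n : ℕ) (p x : ℝ) (hx : 0 ≤ x) (hn : ⌊x⌋₊ ≤ n) :
    binomCDF n p x = pS n p ⌊x⌋₊ := by
  unfold binomCDF pS
  have h1 : ∀ j ∈ Finset.range (n+1),
      (if (j : ℝ) ≤ x then binomPMF n p j else 0)
        = (if j ∈ Finset.range (⌊x⌋₊+1) then binomPMF n p j else 0) := by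
    intro j _
    congr 1
    simp only [Finset.mem_range, Nat.lt_succ_iff]
    rw [eq_iff_iff, ← Nat.le_floor_iff hx]
  rw [Finset.sum_congr rfl h1, Finset.sum_ite_mem]
  congr 1
  ext a
  simp only [Finset.mem_inter, Finset.mem_range]
  omega

theorem binomCDF_floor_lt_add_penalty
    (n2 : ℕ) (hn2 : 0 < n2)
    (p1 p2 q1 q2 : ℝ)
    (hp2 : 0 < p2) (hp12 : p2 < p1) (hp1 : p1 < 1)
    (hq1 : 0 < q1) (hq1' : q1 < 1) (hq2 : 0 < q2) (hq2' : q2 < 1)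
    (hratio : q1 / q2 ≥ p1 / p2)
    (n1 : ℝ) (hn1 : n1 = (p2 / p1) * n2)
    (hceil : ⌈n1⌉₊ < n2) (hfloor : 1 ≤ ⌊n1⌋₊) :
    ∀ x : ℝ, 0 ≤ x → x ≤ (n2 : ℝ) * q2 - 1 →
      binomCDF ⌊n1⌋₊ q1 x <
        binomCDF n2 q2 x +
          Real.sqrt (q1 / (2 * Real.exp 1 * ⌊n1⌋₊ * (1 - q1))) *
            (if ⌊n1⌋₊ = ⌈n1⌉₊ then 0 else 1) := by
  intro x hx0 hx1
  set m := ⌊n1⌋₊ with hm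
  set k := ⌊x⌋₊ with hkdef
  set μ := (n2:ℝ) * q2 with hμ
  have hp1pos : (0:ℝ) < p1 := lt_trans hp2 hp12
  have hn2pos : (0:ℝ) < n2 := by exact_mod_cast hn2
  have hkx : (k:ℝ) ≤ x := Nat.floor_le hx0
  have hk1μ : (k:ℝ)+1 ≤ μ := by linarith
  have hμpos : (0:ℝ) < μ := by
    have : (0:ℝ) ≤ k := Nat.cast_nonneg k
    linarith
  have hn1pos : 0 < n1 := by
    rw [hn1]; positivity
  have hmn1 : (m:ℝ) ≤ n1 := Nat.floor_le hn1pos.le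
  have hn1ceil : n1 ≤ (⌈n1⌉₊:ℝ) := Nat.le_ceil n1
  have hmpos : (0:ℝ) < m := by exact_mod_cast hfloor
  have hq21 : q2 * p1 ≤ q1 * p2 := by
    rw [ge_iff_le, div_le_div_iff₀ hp2 hq2] at hratio
    linarith
  have hμn1q1 : μ ≤ n1 * q1 := by
    rw [hμ, hn1]
    rw [div_mul_eq_mul_div, div_mul_eq_mul_div, le_div_iff₀ hp1pos]
    nlinarith
  have hμceil : μ ≤ (⌈n1⌉₊:ℝ) * q1 :=
    le_trans hμn1q1 (mul_le_mul_of_nonneg_right hn1ceil hq1.le)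
  have hceilm : (⌈n1⌉₊:ℝ) ≤ (m:ℝ)+1 := by
    have := Nat.ceil_le_floor_add_one n1
    exact_mod_cast this
  have hμm1 : μ ≤ ((m:ℝ)+1) * q1 :=
    le_trans hμceil (mul_le_mul_of_nonneg_right hceilm hq1.le)
  have hkm : k < m := by
    have h1 : (k:ℝ)+1 ≤ ((m:ℝ)+1)*q1 := le_trans hk1μ hμm1
    have h2 : ((m:ℝ)+1)*q1 < (m:ℝ)+1 := by nlinarith
    have : (k:ℝ) < (m:ℝ) := by linarith
    exact_mod_cast this
  have hkn2 : k < n2 := by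
    have h2 : μ < (n2:ℝ) := by nlinarith
    have : (k:ℝ) < (n2:ℝ) := by linarith
    exact_mod_cast this
  have hμltm1 : μ < (m:ℝ)+1 := by nlinarith
  rw [binomCDF_eq_pS m q1 x hx0 (by omega), binomCDF_eq_pS n2 q2 x hx0 (by omega), ← hkdef]
  have hq2eq : q2 = μ/(n2:ℝ) := by
    rw [hμ]; field_simp
  obtain ⟨m', hm'⟩ : ∃ m', m = m' + 1 := ⟨m - 1, by omega⟩
  by_cases hcase : m = ⌈n1⌉₊
  · -- n1 is an integer, equal to m
    rw [if_pos hcase, mul_zero, add_zero]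
    have hn1m : n1 = (m:ℝ) := by
      have h1 : n1 ≤ (m:ℝ) := by rw [hcase] at hmn1 ⊢; linarith [hn1ceil]
      linarith
    have hμmq1 : μ ≤ (m:ℝ) * q1 := by rw [← hn1m]; exact hμn1q1
    have hμltm : μ < (m:ℝ) := by nlinarith
    have h1 : pS m q1 k ≤ pS m (μ/(m:ℝ)) k := by
      rw [hm']
      apply pS_anti m' k (by omega) (by positivity) _ hq1'.le
      have hc : ((m'+1:ℕ):ℝ) = (m:ℝ) := by rw [hm']
      rw [hc, div_le_iff₀ hmpos]
      linarith [hμmq1, mul_comm (m:ℝ) q1]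
    have h2 : pS m (μ/(m:ℝ)) k < pS n2 (μ/(n2:ℝ)) k := by
      apply chain μ k hk1μ m hμltm n2
      have : (m:ℝ) < n2 := by rw [hcase] at hmpos ⊢; exact_mod_cast (by exact_mod_cast hceil)
      exact_mod_cast this
    rw [hq2eq]
    linarith
  · -- n1 is not an integer; ceil = m + 1
    rw [if_neg hcase, mul_one]
    have hceilm1 : ⌈n1⌉₊ = m + 1 := by
      have h1 : m ≤ ⌈n1⌉₊ := Nat.floor_le_ceil n1
      have h2 : ⌈n1⌉₊ ≤ m + 1 := Nat.ceil_le_floor_add_one n1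
      omega
    have hm1n2 : m + 1 < n2 := by omega
    have h0 := pS_step m k hkm.le q1
    have hpen : q1 * binomPMF m q1 k ≤ Real.sqrt (q1/(2*Real.exp 1*(m:ℝ)*(1-q1))) :=
      pmf_bound m k hfloor q1 hq1 hq1' (le_trans hk1μ hμm1)
    have h1 : pS (m+1) q1 k ≤ pS (m+1) (μ/((m:ℝ)+1)) k := by
      apply pS_anti m k hkm.le (by positivity) _ hq1'.le
      rw [div_le_iff₀ (by positivity)]
      linarith
    have h2 : pS (m+1) (μ/((m:ℝ)+1)) k < pS n2 (μ/(n2:ℝ)) k := by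
      have hc := chain μ k hk1μ (m+1) (by push_cast; linarith) n2 (by omega)
      push_cast at hc ⊢
      exact hc
    rw [hq2eq]
    linarith
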